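/- Let g : 𝔻 → ℂ be a non-constant bounded holomorphic function on the open unit disc 𝔻 ⊆ ℂ. Then for every compact set M ⊆ 𝔻 and every ε > 0 there exists a holomorphic function h : 𝔻 → ℂ such that h(𝔻) is dense in ℂ and sup_{z ∈ M} |g(z) − h(z)| < ε. -/

import Mathlib

open Metric Set

/-- Theorem 1.2 in the special case `X = 𝔻`, `Y = ℂ`: any non-constant bounded holomorphic
function `g` on the open unit disc can be approximated, uniformly on any compact `M ⊆ 𝔻` and
within any `ε > 0`, by a holomorphic function `h : 𝔻 → ℂ` with dense image. -/
theorem stmt4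
    (g : ℂ → ℂ) (hg : DifferentiableOn ℂ g (ball (0 : ℂ) 1))
    (hgnc : ¬ ∃ c, ∀ z ∈ ball (0 : ℂ) 1, g z = c)
    (hgb : Bornology.IsBounded (g '' ball (0 : ℂ) 1))
    (M : Set ℂ) (hM : IsCompact M) (hMX : M ⊆ ball (0 : ℂ) 1)
    (ε : ℝ) (hε : 0 < ε) :
    ∃ h : ℂ → ℂ, DifferentiableOn ℂ h (ball (0 : ℂ) 1) ∧
      Dense (h '' ball (0 : ℂ) 1) ∧ ∀ z ∈ M, ‖g z - h z‖ < ε := by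
  -- Ω is open
  have hga : AnalyticOnNhd ℂ g (ball (0:ℂ) 1) := hg.analyticOnNhd isOpen_ball
  have hΩopen : IsOpen (g '' ball (0:ℂ) 1) := by
    rcases hga.is_constant_or_isOpen (convex_ball _ _).isPreconnected with hc | ho
    · exact absurd hc hgnc
    · exact ho _ subset_rfl isOpen_ball
  set Ω := g '' ball (0:ℂ) 1 with hΩdef
  have h0 : (0:ℂ) ∈ ball (0:ℂ) 1 := mem_ball_self one_pos
  set p := g 0 with hpdef
  have hpΩ : p ∈ Ω := mem_image_of_mem _ h0
  -- complement of Ω is nonempty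
  obtain ⟨R, hR⟩ := hgb.subset_closedBall 0
  have hcne : Ωᶜ.Nonempty := by
    refine ⟨(|R| + 1 : ℝ), fun hmem => ?_⟩
    have := hR hmem
    simp only [mem_closedBall, Complex.dist_eq, sub_zero] at this
    rw [Complex.norm_real, Real.norm_eq_abs] at this
    have h1 : |(|R| + 1)| = |R| + 1 := abs_of_pos (by positivity)
    rw [h1] at this
    linarith [le_abs_self R]
  -- distance to the complement, realized at w
  obtain ⟨w, hwc, hwd⟩ := (hΩopen.isClosed_compl).exists_infDist_eq_dist hcne p
  set d := infDist p Ωᶜ with hddef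
  have hwΩ : w ∉ Ω := hwc
  have hdw : dist p w = d := hwd.symm
  have hd0 : 0 < d := by
    rcases Metric.isOpen_iff.mp hΩopen p hpΩ with ⟨r, hr0, hrsub⟩
    have : r ≤ dist p w := by
      by_contra hlt
      push_neg at hlt
      exact hwΩ (hrsub (by simpa [mem_ball, dist_comm] using hlt))
    linarith [hdw ▸ this]
  have hballsub : ball p d ⊆ Ω := by
    intro x hx
    by_contra hxc
    have h1 : infDist p Ωᶜ ≤ dist p x := infDist_le_dist_of_mem hxc
    rw [mem_ball, dist_comm] at hx
    exact absurd (lt_of_le_of_lt h1 hx) (lt_irrefl d)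
  -- the unit vector towards w
  set u : ℂ := (w - p) / d with hudef
  have hwp : w - p ≠ 0 := by
    intro hz
    exact hwΩ (by rw [sub_eq_zero.mp hz]; exact hpΩ)
  have hu1 : ‖u‖ = 1 := by
    rw [hudef, norm_div]
    have : ‖(d:ℂ)‖ = d := by
      rw [Complex.norm_real, Real.norm_eq_abs, abs_of_pos hd0]
    rw [this]
    have : ‖w - p‖ = d := by
      rw [← hdw, dist_comm, Complex.dist_eq]
    rw [this, div_self hd0.ne']
  have hu0 : u ≠ 0 := by
    intro hz; rw [hz, norm_zero] at hu1; exact one_ne_zero hu1.symm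
  have hdC : (d:ℂ) ≠ 0 := by exact_mod_cast hd0.ne'
  have hwpu : w - p = d * u := by
    rw [hudef, mul_comm, div_mul_cancel₀ _ hdC]
  -- g z ≠ w on the ball
  have hgw : ∀ z ∈ ball (0:ℂ) 1, w - g z ≠ 0 := by
    intro z hz hzero
    exact hwΩ (by rw [sub_eq_zero.mp hzero]; exact mem_image_of_mem _ hz)
  set β : ℂ := Complex.I * u with hβdef
  -- bound for exp(β/(w - g z)) on M
  have hcont : ContinuousOn (fun z => Complex.exp (β / (w - g z))) M := by
    apply Complex.continuous_exp.comp_continuousOn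
    apply ContinuousOn.div continuousOn_const
    · exact (continuousOn_const.sub (hg.continuousOn.mono hMX))
    · exact fun z hz => hgw z (hMX hz)
  obtain ⟨B, hB⟩ := hM.exists_bound_of_continuousOn hcont
  set B' : ℝ := max B 1 with hB'def
  have hB'0 : 0 < B' := lt_of_lt_of_le one_pos (le_max_right _ _)
  set δ : ℝ := ε / (2 * B') with hδdef
  have hδ0 : 0 < δ := by positivity
  have hδC : (δ:ℂ) ≠ 0 := by exact_mod_cast hδ0.ne'
  -- the function
  set F : ℂ → ℂ := fun z => g z + (δ:ℂ) * Complex.exp (β / (w - g z)) with hFdef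
  have hFdiff : DifferentiableOn ℂ F (ball (0:ℂ) 1) := by
    apply hg.add
    apply DifferentiableOn.const_mul
    apply DifferentiableOn.cexp
    exact (differentiableOn_const β).div ((differentiableOn_const w).sub hg) (fun z hz => hgw z hz)
  refine ⟨F, hFdiff, ?_, ?_⟩
  · -- density
    have key : ∀ c : ℂ, c ≠ w → ∀ η : ℝ, 0 < η → ∃ y ∈ F '' ball (0:ℂ) 1, dist c y < η := by
      intro c hc η hη
      set v : ℂ := (c - w) / δ with hvdef
      have hv0 : v ≠ 0 := by
        rw [hvdef]
        exact div_ne_zero (sub_ne_zero.mpr hc) hδC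
      set L : ℂ := Complex.log v with hLdef
      set T : ℝ := max (1 / (2 * d)) (1 / η) with hTdef
      obtain ⟨n, hn⟩ := exists_nat_gt ((T - L.im) / (2 * Real.pi))
      set t : ℂ := -Complex.I * (L + (2 * Real.pi * n) * Complex.I) with htdef
      have htre : t.re = L.im + 2 * Real.pi * n := by
        rw [htdef]
        simp [Complex.add_re, Complex.add_im, Complex.mul_re, Complex.mul_im]
      have hTt : T < t.re := by
        rw [htre]
        have h2pi : (0:ℝ) < 2 * Real.pi := by positivity
        have := (div_lt_iff₀ h2pi).mp hn
        linarith
      have htre0 : 0 < t.re := by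
        have h1 : (0:ℝ) < 1 / (2 * d) := by positivity
        have h2 : 1 / (2 * d) ≤ T := le_max_left _ _
        linarith
      have ht0 : t ≠ 0 := by
        intro hz
        rw [hz] at htre0
        simp at htre0
      -- the point in the disc
      set w' : ℂ := w - u / t with hw'def
      have hw'ball : w' ∈ ball p d := by
        have hkey : ‖(d:ℂ) - t⁻¹‖ < d := by
          have hN : 0 < Complex.normSq t := Complex.normSq_pos.mpr ht0
          have hinvre : (t⁻¹).re = t.re / Complex.normSq t := Complex.inv_re t
          have hinvim : (t⁻¹).im = -t.im / Complex.normSq t := Complex.inv_im t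
          have h2dt : 1 < 2 * d * t.re := by
            have h1 : 1 / (2 * d) ≤ T := le_max_left _ _
            have h2 : 1 / (2 * d) < t.re := lt_of_le_of_lt h1 hTt
            rw [div_lt_iff₀ (by positivity)] at h2
            linarith
          have hnorm2 : ‖(d:ℂ) - t⁻¹‖^2 = (d - (t⁻¹).re)^2 + ((t⁻¹).im)^2 := by
            rw [show ‖(d:ℂ) - t⁻¹‖^2 = Complex.normSq ((d:ℂ) - t⁻¹) by
              rw [← Complex.sq_norm]]
            rw [Complex.normSq_apply, Complex.sub_re, Complex.sub_im, Complex.ofReal_re,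
              Complex.ofReal_im]
            ring
          have hlt : ‖(d:ℂ) - t⁻¹‖^2 < d^2 := by
            rw [hnorm2, hinvre, hinvim]
            have hNsq : Complex.normSq t = t.re^2 + t.im^2 := by
              rw [Complex.normSq_apply]; ring
            rw [hNsq]
            have hden : (0:ℝ) < t.re^2 + t.im^2 := by rw [← hNsq]; exact hN
            field_simp
            nlinarith [sq_nonneg t.im, sq_nonneg t.re, hd0, mul_pos hden (sub_pos.mpr h2dt)]
          have := lt_of_pow_lt_pow_left₀ 2 hd0.le hlt
          exact this
        rw [mem_ball, dist_eq_norm, hw'def]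
        have : w - u / t - p = u * ((d:ℂ) - t⁻¹) := by
          have : w - p = (d:ℂ) * u := hwpu
          field_simp
          linear_combination t * this
        rw [show w - u / t - p = (w - p) - u / t by ring, hwpu]
        calc ‖(d:ℂ) * u - u / t‖ = ‖u * ((d:ℂ) - t⁻¹)‖ := by ring_nf
          _ = ‖u‖ * ‖(d:ℂ) - t⁻¹‖ := norm_mul _ _
          _ = ‖(d:ℂ) - t⁻¹‖ := by rw [hu1, one_mul]
          _ < d := hkey
      obtain ⟨z', hz', hgz'⟩ := hballsub hw'ball
      refine ⟨F z', mem_image_of_mem _ hz', ?_⟩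
      -- compute F z'
      have hwsub : w - w' = u / t := by rw [hw'def]; ring
      have hexp : Complex.exp (β / (w - g z')) = v := by
        rw [hgz', hwsub, hβdef]
        have : Complex.I * u / (u / t) = Complex.I * t := by
          field_simp
        rw [this]
        have hIt : Complex.I * t = L + (2 * Real.pi * n) * Complex.I := by
          rw [htdef]
          have : Complex.I * (-Complex.I * (L + (2 * Real.pi * n) * Complex.I))
              = (Complex.I * -Complex.I) * (L + (2 * Real.pi * n) * Complex.I) := by ring
          rw [this]
          simp [Complex.I_mul_I]
        rw [hIt, Complex.exp_add, hLdef, Complex.exp_log hv0]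
        have : Complex.exp ((2 * Real.pi * n) * Complex.I) = 1 := by
          have := Complex.exp_int_mul_two_pi_mul_I (n : ℤ)
          rw [show ((n:ℤ):ℂ) * (2 * Real.pi * Complex.I) = (2 * Real.pi * n) * Complex.I by push_cast; ring] at this
          exact this
        rw [this, mul_one]
      have hFz' : F z' = c - u / t := by
        rw [hFdef]
        simp only
        rw [hexp, hgz', hvdef, hw'def]
        field_simp
        ring
      rw [hFz', dist_eq_norm]
      have : c - (c - u / t) = u / t := by ring
      rw [this, norm_div, hu1]
      have htnorm : t.re ≤ ‖t‖ := by
        calc t.re ≤ |t.re| := le_abs_self _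
          _ ≤ ‖t‖ := Complex.abs_re_le_norm t
          _ = ‖t‖ := rfl
      have hηT : 1 / η ≤ T := le_max_right _ _
      have h1 : 1 / η < t.re := lt_of_le_of_lt hηT hTt
      calc 1 / ‖t‖ ≤ 1 / t.re := by
            apply one_div_le_one_div_of_le htre0 htnorm
        _ < η := by
            rw [div_lt_iff₀ htre0]
            rw [div_lt_iff₀ hη] at h1
            linarith
    rw [Metric.dense_iff]
    intro c r hr
    rcases eq_or_ne c w with rfl | hc
    · have hne : c + ((r/2 : ℝ):ℂ) ≠ c := by
        intro hzz
        have h4 := congrArg Complex.re hzz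
        simp only [Complex.add_re, Complex.ofReal_re] at h4
        linarith
      obtain ⟨y, hy, hyd⟩ := key (c + ((r/2:ℝ):ℂ)) hne (r/2) (by linarith)
      refine ⟨y, mem_inter ?_ hy⟩
      have h2 : dist (c + ((r/2:ℝ):ℂ)) c = r/2 := by
        rw [dist_eq_norm]
        have h3 : c + ((r/2:ℝ):ℂ) - c = ((r/2:ℝ):ℂ) := by ring
        rw [h3, Complex.norm_real, Real.norm_eq_abs, abs_of_pos (by linarith : (0:ℝ) < r/2)]
      have h6 : dist y (c + ((r/2:ℝ):ℂ)) < r/2 := by rw [dist_comm]; exact hyd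
      have h5 : dist y c < r := by
        have h7 := dist_triangle y (c + ((r/2:ℝ):ℂ)) c
        linarith
      rw [mem_ball]
      exact h5
    · obtain ⟨y, hy, hyd⟩ := key c hc r hr
      exact ⟨y, mem_inter (by rwa [mem_ball, dist_comm]) hy⟩
  · -- approximation on M
    intro z hz
    have : g z - F z = -((δ:ℂ) * Complex.exp (β / (w - g z))) := by
      rw [hFdef]; ring
    rw [this, norm_neg, norm_mul]
    have hδnorm : ‖(δ:ℂ)‖ = δ := by
      rw [Complex.norm_real, Real.norm_eq_abs, abs_of_pos hδ0]
    rw [hδnorm]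
    have hexpB : ‖Complex.exp (β / (w - g z))‖ ≤ B := hB z hz
    have hBB' : B ≤ B' := le_max_left _ _
    calc δ * ‖Complex.exp (β / (w - g z))‖ ≤ δ * B' := by
          apply mul_le_mul_of_nonneg_left (le_trans hexpB hBB') hδ0.le
      _ = ε / 2 := by rw [hδdef]; field_simp
      _ < ε := by linarith
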